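/- Let M₁(a) denote the number of pairs (n,k) of positive integers with 1 ≤ k ≤ n such that the unsigned Stirling number of the first kind c(n,k) equals a. For every integer a ≥ 2 and every positive integer b such that (b/2)^b > a, one has M₁(a) ≤ 2b. -/

import Mathlib

/-- Unsigned Stirling numbers of the first kind, defined by the standard recurrence. -/
def stirling1 : ℕ → ℕ → ℕ
  | 0, 0 => 1
  | 0, _ + 1 => 0
  | _ + 1, 0 => 0
  | n + 1, k + 1 => stirling1 n k + n * stirling1 n (k + 1)

/-- `M₁ a` is the number of pairs `(n, k)` with `1 ≤ k ≤ n` and `c(n, k) = a`. -/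
noncomputable def M1 (a : ℕ) : ℕ :=
  Nat.card {p : ℕ × ℕ // 1 ≤ p.2 ∧ p.2 ≤ p.1 ∧ stirling1 p.1 p.2 = a}

lemma stirling1_zero_right (n : ℕ) : stirling1 (n+1) 0 = 0 := rfl

lemma stirling1_self (n : ℕ) : stirling1 n n = 1 := by
  induction n with
  | zero => rfl
  | succ n ih =>
    have hz : ∀ m k, m < k → stirling1 m k = 0 := by
      intro m
      induction m with
      | zero => intro k hk; match k, hk with | k+1, _ => rfl
      | succ m ihm =>
        intro k hk
        match k, hk with
        | k+1, hk =>
          show stirling1 m k + m * stirling1 m (k+1) = 0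
          rw [ihm k (by omega), ihm (k+1) (by omega)]; ring
    show stirling1 n n + n * stirling1 n (n+1) = 1
    rw [ih, hz n (n+1) (by omega)]; ring

lemma stirling1_pos : ∀ n k : ℕ, 1 ≤ k → k ≤ n → 0 < stirling1 n k := by
  intro n
  induction n with
  | zero => intro k h1 h2; omega
  | succ n ih =>
    intro k h1 h2
    match k, h1 with
    | k+1, _ =>
      show 0 < stirling1 n k + n * stirling1 n (k+1)
      rcases Nat.eq_zero_or_pos k with hk | hk
      · subst hk
        rcases Nat.eq_zero_or_pos n with hn | hn
        · subst hn; norm_num [stirling1]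
        · have := ih 1 (le_refl 1) hn
          positivity
      · have := ih k hk (by omega)
        positivity

lemma stirling1_succ_succ (n k : ℕ) :
    stirling1 (n+1) (k+1) = stirling1 n k + n * stirling1 n (k+1) := rfl

lemma stirling1_one (m : ℕ) : stirling1 (m+1) 1 = m.factorial := by
  induction m with
  | zero => rfl
  | succ m ih =>
    show stirling1 (m+1) 0 + (m+1) * stirling1 (m+1) 1 = (m+1).factorial
    rw [stirling1_zero_right, ih, Nat.factorial_succ]; ring

lemma factorial_le_stirling1 (m : ℕ) : ∀ k : ℕ, 1 ≤ k → m.factorial ≤ stirling1 (k + m) k := by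
  intro k
  induction k with
  | zero => omega
  | succ k ih =>
    intro _
    rcases Nat.eq_zero_or_pos k with hk | hk
    · subst hk
      rw [show 0 + 1 + m = m + 1 by ring, stirling1_one]
    · calc m.factorial ≤ stirling1 (k + m) k := ih hk
        _ ≤ stirling1 (k + m + 1) (k + 1) := by
            rw [stirling1_succ_succ]; exact Nat.le_add_right _ _
        _ = stirling1 (k + 1 + m) (k + 1) := by ring_nf

lemma stirling1_diag_strictMono (m : ℕ) (hm : 1 ≤ m) :
    StrictMono (fun k => stirling1 (k + m) k) := by
  apply strictMono_nat_of_lt_succ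
  intro k
  have h1 : stirling1 (k + 1 + m) (k + 1) = stirling1 (k + m) k + (k + m) * stirling1 (k + m) (k + 1) := by
    rw [show k + 1 + m = (k + m) + 1 by ring, stirling1_succ_succ]
  have h2 : 0 < stirling1 (k + m) (k + 1) := stirling1_pos _ _ (by omega) (by omega)
  simp only [h1]
  have : 0 < (k + m) * stirling1 (k + m) (k + 1) := by positivity
  omega

lemma fact_mul_pow_le (t : ℕ) : ∀ s : ℕ, t.factorial * (t+1)^s ≤ (t + s).factorial := by
  intro s
  induction s with
  | zero => simp
  | succ s ih =>
    calc t.factorial * (t+1)^(s+1) = t.factorial * (t+1)^s * (t+1) := by ring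
      _ ≤ (t+s).factorial * (t+1) := Nat.mul_le_mul_right _ ih
      _ ≤ (t+s).factorial * (t+s+1) := Nat.mul_le_mul_left _ (by omega)
      _ = (t + (s+1)).factorial := by rw [show t + (s+1) = (t+s)+1 by ring, Nat.factorial_succ]; ring

/-- If `a ≥ 2` and `b ≥ 1` satisfies `(b/2)^b > a`, then `M₁(a) ≤ 2b`. -/
theorem M1_le_of_pow_gt (a b : ℕ) (ha : 2 ≤ a) (hb : 1 ≤ b)
    (h : (a : ℝ) < ((b : ℝ) / 2) ^ b) : M1 a ≤ 2 * b := by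
  -- a < b^b in ℕ
  have hab : a < b ^ b := by
    have h1 : ((b : ℝ) / 2) ^ b ≤ (b : ℝ) ^ b := by
      apply pow_le_pow_left₀ (by positivity)
      have : (1:ℝ) ≤ (b:ℝ) := by exact_mod_cast hb
      linarith
    have : (a : ℝ) < ((b ^ b : ℕ) : ℝ) := by push_cast; linarith
    exact_mod_cast this
  -- key bounds on m = n - k for a solution (n, k)
  have key : ∀ p : {p : ℕ × ℕ // 1 ≤ p.2 ∧ p.2 ≤ p.1 ∧ stirling1 p.1 p.2 = a},
      1 ≤ p.1.1 - p.1.2 ∧ p.1.1 - p.1.2 ≤ 2 * b := by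
    rintro ⟨⟨n, k⟩, hk1, hkn, hs⟩
    simp only
    have hlt : k < n := by
      rcases lt_or_eq_of_le hkn with h' | h'
      · exact h'
      · exfalso; rw [h', stirling1_self] at hs; omega
    set m := n - k with hm
    have hnm : n = k + m := by omega
    refine ⟨by omega, ?_⟩
    -- m! ≤ a
    have hfle : m.factorial ≤ a := by
      rw [← hs, hnm]; exact factorial_le_stirling1 m k hk1
    by_contra hcon
    push_neg at hcon
    -- then b^b ≤ m!
    have h1 : b ^ b ≤ (b+1)^(b+1) :=
      le_trans (Nat.pow_le_pow_left (by omega) b) (Nat.pow_le_pow_right (by omega) (by omega))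
    have h2 : (b+1)^(b+1) ≤ (2*b+1).factorial := by
      calc (b+1)^(b+1) ≤ b.factorial * (b+1)^(b+1) :=
            Nat.le_mul_of_pos_left _ b.factorial_pos
        _ ≤ (b + (b+1)).factorial := fact_mul_pow_le b (b+1)
        _ = (2*b+1).factorial := by ring_nf
    have h3 : (2*b+1).factorial ≤ m.factorial := Nat.factorial_le (by omega)
    omega
  -- injection into Fin (2*b)
  have hinj : ∃ f : {p : ℕ × ℕ // 1 ≤ p.2 ∧ p.2 ≤ p.1 ∧ stirling1 p.1 p.2 = a} → Fin (2*b),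
      Function.Injective f := by
    refine ⟨fun p => ⟨p.1.1 - p.1.2 - 1, by have := key p; omega⟩, ?_⟩
    rintro ⟨⟨n₁, k₁⟩, hp⟩ ⟨⟨n₂, k₂⟩, hq⟩ hfeq
    have h₁ := key ⟨⟨n₁, k₁⟩, hp⟩
    have h₂ := key ⟨⟨n₂, k₂⟩, hq⟩
    simp only [Fin.mk.injEq] at hfeq
    simp only at h₁ h₂
    have hm : n₁ - k₁ = n₂ - k₂ := by omega
    set m := n₁ - k₁ with hmdef
    have hn₁ : n₁ = k₁ + m := by omega
    have hn₂ : n₂ = k₂ + m := by omega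
    have hval : stirling1 (k₁ + m) k₁ = stirling1 (k₂ + m) k₂ := by
      rw [← hn₁, ← hn₂, hp.2.2, hq.2.2]
    have hk : k₁ = k₂ := (stirling1_diag_strictMono m (by omega)).injective hval
    apply Subtype.ext
    simp only [Prod.mk.injEq]
    exact ⟨by omega, hk⟩
  obtain ⟨f, hf⟩ := hinj
  have := Nat.card_le_card_of_injective f hf
  simpa [M1] using this
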